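/- Suppose for each k ∈ ℕ there exists u_k in the Sobolev-type space H^k with T u_k = α, and suppose for all s > k, H^s ∩ ker T is dense in H^k ∩ ker T. Then there exists u ∈ ⋂_k H^k with T u = α. -/
import Mathlib


/-- **Exact regularity via a Mittag-Leffler/telescoping argument.**
Let `(H^k)` be a decreasing family of complete subspaces of a vector space
`V`, with norms `n_k` increasing in `k`, let `T` be a linear map continuous
on each `H^k` (with values in a normed target `W`), and let `α ∈ W`.
Suppose that for every `k` there is `u_k ∈ H^k` with `T u_k = α`, and that
for all `s ≥ k` the space `H^s ∩ ker T` is dense in `H^k ∩ ker T` for the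
norm `n_k`.  Then there exists `u ∈ ⋂_k H^k` with `T u = α`. -/
theorem stmt12
    {V W : Type*} [AddCommGroup V] [Module ℂ V] [AddCommGroup W] [Module ℂ W]
    (Hk : ℕ → Submodule ℂ V) (hdec : ∀ k, Hk (k + 1) ≤ Hk k)
    (nk : ℕ → V → ℝ) (nW : W → ℝ)
    (hn0 : ∀ k, nk k 0 = 0)
    (hnonneg : ∀ k x, 0 ≤ nk k x)
    (hnadd : ∀ k x y, nk k (x + y) ≤ nk k x + nk k y)
    (hnneg : ∀ k x, nk k (-x) = nk k x)
    (hmono : ∀ k x, nk k x ≤ nk (k + 1) x)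
    (hsepV : ∀ x : V, (∀ ε > 0, nk 0 x < ε) → x = 0)
    (hWnonneg : ∀ w, 0 ≤ nW w)
    (hWadd : ∀ w w', nW (w + w') ≤ nW w + nW w')
    (hWneg : ∀ w, nW (-w) = nW w)
    (hsepW : ∀ w : W, (∀ ε > 0, nW w < ε) → w = 0)
    (hcomplete : ∀ k (u : ℕ → V), (∀ n, u n ∈ Hk k) →
      (∀ ε > 0, ∃ N, ∀ m ≥ N, ∀ n ≥ N, nk k (u m - u n) < ε) →
      ∃ x ∈ Hk k, ∀ ε > 0, ∃ N, ∀ n ≥ N, nk k (u n - x) < ε)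
    (T : V →ₗ[ℂ] W)
    (hTcont : ∀ k, ∃ Ck : ℝ, ∀ x ∈ Hk k, nW (T x) ≤ Ck * nk k x)
    (α : W)
    (hsol : ∀ k, ∃ u ∈ Hk k, T u = α)
    (hdense : ∀ k s, k ≤ s → ∀ x ∈ Hk k, T x = 0 →
      ∀ ε > 0, ∃ y ∈ Hk s, T y = 0 ∧ nk k (x - y) < ε) :
    ∃ u : V, (∀ k, u ∈ Hk k) ∧ T u = α := by

  classical
  have hmono' : ∀ k s, k ≤ s → ∀ x, nk k x ≤ nk s x := by
    intro k s hks
    induction s, hks using Nat.le_induction with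
    | base => intro x; exact le_rfl
    | succ s hks ih => intro x; exact (ih x).trans (hmono s x)
  have hle : ∀ k s, k ≤ s → Hk s ≤ Hk k := by
    intro k s hks
    induction s, hks using Nat.le_induction with
    | base => exact le_rfl
    | succ s hks ih => exact (hdec s).trans ih
  have hsym : ∀ k (x y : V), nk k (x - y) = nk k (y - x) := by
    intro k x y; rw [← hnneg k (y - x), neg_sub]
  obtain ⟨u0, hu0, hTu0⟩ := hsol 0
  have step' : ∀ k (u : V), ∃ u', (u ∈ Hk k → T u = α →
      u' ∈ Hk (k+1) ∧ T u' = α ∧ nk k (u' - u) < (1/2:ℝ)^k) := by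
    intro k u
    by_cases h : u ∈ Hk k ∧ T u = α
    · obtain ⟨hu, hTu⟩ := h
      obtain ⟨v, hv, hTv⟩ := hsol (k+1)
      have hker : T (u - v) = 0 := by rw [map_sub, hTu, hTv, sub_self]
      have huv : u - v ∈ Hk k := Submodule.sub_mem _ hu (hdec k hv)
      obtain ⟨y, hy, hTy, hyd⟩ := hdense k (k+1) (Nat.le_succ k) (u - v) huv hker
        ((1/2:ℝ)^k) (by positivity)
      refine ⟨v + y, fun _ _ => ⟨Submodule.add_mem _ hv hy, ?_, ?_⟩⟩
      · rw [map_add, hTv, hTy, add_zero]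
      · have heq : v + y - u = -(u - v - y) := by abel
        rw [heq, hnneg]; exact hyd
    · exact ⟨0, fun hu hT => absurd ⟨hu, hT⟩ h⟩
  choose F hF using step'
  set seq : ℕ → V := fun k => Nat.rec u0 (fun k prev => F k prev) k with hseqdef
  have hprop : ∀ k, seq k ∈ Hk k ∧ T (seq k) = α := by
    intro k
    induction k with
    | zero => exact ⟨hu0, hTu0⟩
    | succ k ih =>
      obtain ⟨h1, h2, _⟩ := hF k (seq k) ih.1 ih.2
      exact ⟨h1, h2⟩
  have hlt : ∀ k, nk k (seq (k+1) - seq k) < (1/2:ℝ)^k := fun k =>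
    (hF k (seq k) (hprop k).1 (hprop k).2).2.2
  have cauchy : ∀ k m, k ≤ m → ∀ p,
      nk k (seq (m+p) - seq m) ≤ 2*(1/2:ℝ)^m - 2*(1/2:ℝ)^(m+p) := by
    intro k m hkm p
    induction p with
    | zero => simp [sub_self, hn0 k]
    | succ p ih =>
      have h1 : nk k (seq (m+p+1) - seq m) ≤
          nk k (seq (m+p+1) - seq (m+p)) + nk k (seq (m+p) - seq m) := by
        have := hnadd k (seq (m+p+1) - seq (m+p)) (seq (m+p) - seq m)
        simpa [sub_add_sub_cancel] using this
      have h2 : nk k (seq (m+p+1) - seq (m+p)) ≤ (1/2:ℝ)^(m+p) :=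
        (hmono' k (m+p) (le_trans hkm (Nat.le_add_right m p)) _).trans (hlt (m+p)).le
      have h3 : (2:ℝ)*(1/2)^(m+p+1) = (1/2)^(m+p) := by rw [pow_succ]; ring
      have hplus : m + (p+1) = m + p + 1 := rfl
      rw [hplus, h3]
      linarith
  have hx : ∀ k, ∃ x ∈ Hk k, ∀ ε > 0, ∃ N, ∀ n ≥ N, nk k (seq (n + k) - x) < ε := by
    intro k
    apply hcomplete k (fun n => seq (n + k))
    · intro n; exact hle k (n+k) (Nat.le_add_left k n) (hprop (n+k)).1
    · intro ε hε
      obtain ⟨N, hN⟩ := exists_pow_lt_of_lt_one (show (0:ℝ) < ε/2 by positivity)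
        (show (1/2:ℝ) < 1 by norm_num)
      refine ⟨N, ?_⟩
      have key : ∀ m n, N ≤ n → n ≤ m → nk k (seq (m+k) - seq (n+k)) < ε := by
        intro m n hn hnm
        have hmk : m + k = (n + k) + (m - n) := by omega
        have hb := cauchy k (n+k) (Nat.le_add_left k n) (m - n)
        rw [hmk]
        have hpow : ((1:ℝ)/2)^(n+k) ≤ (1/2)^N :=
          pow_le_pow_of_le_one (by norm_num) (by norm_num)
            (le_trans hn (Nat.le_add_right n k))
        have hpos : (0:ℝ) ≤ 2*(1/2:ℝ)^((n+k)+(m-n)) := by positivity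
        linarith
      intro m hm n hn
      rcases le_total n m with h | h
      · exact key m n hn h
      · rw [hsym]; exact key n m hm h
  choose x hxmem hxconv using hx
  have hxeq : ∀ k, x k = x 0 := by
    intro k
    have hz : ∀ ε > 0, nk 0 (x k - x 0) < ε := by
      intro ε hε
      obtain ⟨N1, hN1⟩ := hxconv k (ε/2) (by positivity)
      obtain ⟨N2, hN2⟩ := hxconv 0 (ε/2) (by positivity)
      set n := max N1 N2 with hn
      have h1 : nk 0 (seq (n + k) - x k) < ε/2 :=
        lt_of_le_of_lt (hmono' 0 k (Nat.zero_le k) _) (hN1 n (le_max_left _ _))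
      have h2 : nk 0 (seq (n + k) - x 0) < ε/2 := by
        have := hN2 (n + k) (le_trans (le_max_right N1 N2) (Nat.le_add_right n k))
        simpa using this
      have h3 : nk 0 (x k - x 0) ≤
          nk 0 (x k - seq (n+k)) + nk 0 (seq (n+k) - x 0) := by
        have := hnadd 0 (x k - seq (n+k)) (seq (n+k) - x 0)
        simpa [sub_add_sub_cancel] using this
      rw [hsym 0 (x k) (seq (n+k))] at h3
      linarith
    exact sub_eq_zero.mp (hsepV _ hz)
  refine ⟨x 0, fun k => hxeq k ▸ hxmem k, ?_⟩
  obtain ⟨C0, hC0⟩ := hTcont 0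
  set C : ℝ := max C0 1 with hCdef
  have hCpos : (0:ℝ) < C := lt_of_lt_of_le one_pos (le_max_right _ _)
  have hfin : ∀ ε > 0, nW (T (x 0) - α) < ε := by
    intro ε hε
    obtain ⟨N, hN⟩ := hxconv 0 (ε / C) (by positivity)
    have hconv : nk 0 (seq N - x 0) < ε / C := by
      have := hN N le_rfl; simpa using this
    have hmem : x 0 - seq N ∈ Hk 0 :=
      Submodule.sub_mem _ (hxmem 0) (hle 0 N (Nat.zero_le N) (hprop N).1)
    have h1 : nW (T (x 0 - seq N)) ≤ C0 * nk 0 (x 0 - seq N) := hC0 _ hmem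
    have h2 : C0 * nk 0 (x 0 - seq N) ≤ C * nk 0 (x 0 - seq N) :=
      mul_le_mul_of_nonneg_right (le_max_left _ _) (hnonneg _ _)
    have h3 : C * nk 0 (x 0 - seq N) < C * (ε / C) := by
      apply mul_lt_mul_of_pos_left _ hCpos
      rw [hsym]; exact hconv
    have h4 : C * (ε / C) = ε := by field_simp
    have heq : T (x 0) - α = T (x 0 - seq N) := by
      rw [map_sub, (hprop N).2]
    rw [heq]
    linarith
  have := hsepW _ hfin
  exact sub_eq_zero.mp this
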